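/- arXiv:1510.03461 — 3 statements merged into one kernel-verified Lean document; each statement's English description precedes it below -/
import Mathlib

section
/- Let p, r be positive integers with p ≥ r+1. Let F be an r-graph with at most p vertices, and let G be an r-graph containing no member of ℋ^F_p. Let u, v be two nonadjacent vertices of G (i.e. no edge of G contains both), and let G' be obtained from G by symmetrizing v to u. Then G' also contains no member of ℋ^F_p. -/
open Finset
open scoped BigOperators Classical

abbrev HG := Finset (Finset ℕ)

/-- The vertex set of a hypergraph: union of its edges. -/
def hverts (G : HG) : Finset ℕ := G.sup id

/-- `G` is `r`-uniform: every edge has `r` vertices. -/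
def Uniform (r : ℕ) (G : HG) : Prop := ∀ e ∈ G, e.card = r

/-- The pair `{u,v}` is covered in `G`: some edge contains both. -/
def Covered (G : HG) (u v : ℕ) : Prop := ∃ e ∈ G, u ∈ e ∧ v ∈ e

/-- `G` contains a copy of `F`. -/
def IsCopyIn (F G : HG) : Prop :=
  ∃ φ : ℕ → ℕ, Set.InjOn φ (hverts F : Set ℕ) ∧ ∀ e ∈ F, e.image φ ∈ G

/-- The subgraph of `G` induced by `C`. -/
def induced (G : HG) (C : Finset ℕ) : HG := G.filter (fun e => e ⊆ C)

/-- `G` contains a member of the family `ℋ^F_p`: there is a core `C` of `p`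
vertices such that the subgraph induced by `C` contains a copy of `F` and every
pair of vertices of `C` is covered in `G`. -/
def ContainsHFam (F : HG) (p : ℕ) (G : HG) : Prop :=
  ∃ C : Finset ℕ, C.card = p ∧ IsCopyIn F (induced G C) ∧
    ∀ u ∈ C, ∀ v ∈ C, u ≠ v → Covered G u v

/-- Turán number: maximum number of edges of an `r`-graph on vertex set `[n]`
satisfying the "freeness" predicate `P`. -/
noncomputable def exNum (r n : ℕ) (P : HG → Prop) : ℕ :=
  sSup {m : ℕ | ∃ G : HG, Uniform r G ∧ (∀ e ∈ G, e ⊆ Finset.range n) ∧ P G ∧ G.card = m}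

/-- The Lagrangian polynomial `p_G(x) = r! ∑_{e∈G} ∏_{i∈e} x_i`. -/
noncomputable def pPoly (r : ℕ) (G : HG) (x : ℕ → ℝ) : ℝ :=
  (r.factorial : ℝ) * ∑ e ∈ G, ∏ i ∈ e, x i

/-- The Lagrangian `λ(G)`. -/
noncomputable def lagrangian (r : ℕ) (G : HG) : ℝ :=
  sSup {v : ℝ | ∃ x : ℕ → ℝ, (∀ i, 0 ≤ x i) ∧ (∑ i ∈ hverts G, x i) = 1 ∧ v = pPoly r G x}

/-- The Lagrangian density `π_λ(F)`. -/
noncomputable def piLambda (r : ℕ) (F : HG) : ℝ :=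
  sSup {v : ℝ | ∃ G : HG, Uniform r G ∧ ¬ IsCopyIn F G ∧ v = lagrangian r G}

/-- `G` is `m`-partite. -/
def MPartite (m : ℕ) (G : HG) : Prop :=
  ∃ f : ℕ → Fin m, ∀ e ∈ G, ∀ u ∈ e, ∀ v ∈ e, u ≠ v → f u ≠ f v

/-- `ℋ^F_{m+1}` is `m`-stable. -/
def MStable (r m : ℕ) (F : HG) : Prop :=
  ∀ ε : ℝ, 0 < ε → ∃ δ : ℝ, 0 < δ ∧ ∃ n₁ : ℕ, ∀ n : ℕ, n₁ ≤ n →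
    ∀ G : HG, Uniform r G → (∀ e ∈ G, e ⊆ Finset.range n) →
      ¬ ContainsHFam F (m + 1) G →
      ((m.descFactorial r : ℝ) / (m : ℝ) ^ r - δ) * (n.choose r : ℝ) < (G.card : ℝ) →
      ∃ Z : Finset ℕ, (Z.card : ℝ) ≤ ε * n ∧
        MPartite m (G.filter (fun e => Disjoint e Z))

/-- Pairs of vertices of `C` not covered in `F`. -/
def uncovPairs (F : HG) (C : Finset ℕ) : Finset (Finset ℕ) :=
  (C.powersetCard 2).filter (fun s => ¬ ∃ e ∈ F, s ⊆ e)

/-- `H` is an expanded `p`-clique with an embedded `F` (i.e. a copy of `H^F_p`). -/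
def IsExpandedClique (r : ℕ) (F : HG) (p : ℕ) (H : HG) : Prop :=
  ∃ C : Finset ℕ, hverts F ⊆ C ∧ C.card = p ∧
    ∃ B : Finset ℕ → Finset ℕ,
      (∀ s ∈ uncovPairs F C, (B s).card = r - 2 ∧ Disjoint (B s) C) ∧
      (∀ s ∈ uncovPairs F C, ∀ t ∈ uncovPairs F C, s ≠ t → Disjoint (B s) (B t)) ∧
      H = F ∪ (uncovPairs F C).image (fun s => s ∪ B s)

/-- The balanced complete `m`-partite `r`-graph `T_r(n,m)` on vertex set `[n]`,
with parts the residue classes modulo `m`. -/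
def turanGraph (r n m : ℕ) : HG :=
  ((Finset.range n).powersetCard r).filter
    (fun e => ∀ u ∈ e, ∀ v ∈ e, u ≠ v → u % m ≠ v % m)

/-- `F` has a vertex of degree 1. -/
def HasDeg1Vertex (F : HG) : Prop :=
  ∃ v ∈ hverts F, (F.filter (fun e => v ∈ e)).card = 1

/-- `T` is a tree on `k` vertices (a connected 2-graph with `k-1` edges). -/
def IsTreeGraph (T : HG) (k : ℕ) : Prop :=
  Uniform 2 T ∧ (hverts T).card = k ∧ T.card + 1 = k ∧
    ∀ u ∈ hverts T, ∀ v ∈ hverts T,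
      Relation.ReflTransGen (fun a b => ({a, b} : Finset ℕ) ∈ T) u v

/-- The `k`-vertex tree `T` satisfies the Erdős–Sós conjecture:
`ex(n,T) ≤ n(k-2)/2` for all `n`. -/
def SatisfiesES (T : HG) (k : ℕ) : Prop :=
  ∀ n : ℕ, 2 * exNum 2 n (fun G => ¬ IsCopyIn T G) ≤ n * (k - 2)

/-- The function `f_r(x) = (∏_{i=1}^{r-1} (x+i-2)) / (x+r-3)^r`. -/
noncomputable def frf (r : ℕ) (x : ℝ) : ℝ :=
  (∏ i ∈ Finset.Icc 1 (r - 1), (x + (i : ℝ) - 2)) / (x + (r : ℝ) - 3) ^ r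

/-- `M` is the rightmost maximum of `f_r` on `[2,∞)`. -/
def IsRightmostMax (r : ℕ) (M : ℝ) : Prop :=
  2 ≤ M ∧ (∀ y : ℝ, 2 ≤ y → frf r y ≤ frf r M) ∧
    (∀ y : ℝ, 2 ≤ y → frf r y = frf r M → y ≤ M)

/-- `F` is the `(r-2)`-fold enlargement of the 2-graph `T`. -/
def IsEnlargement (r : ℕ) (T F : HG) : Prop :=
  ∃ D : Finset ℕ, D.card = r - 2 ∧ Disjoint D (hverts T) ∧ F = T.image (fun e => e ∪ D)

/-- The link of a vertex `i` in `G`. -/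
def link (G : HG) (i : ℕ) : HG := (G.filter (fun e => i ∈ e)).image (fun e => e.erase i)

/-- `λ_i = ∂p_G(x)/∂x_i = r! ∑_{f ∈ L_G(i)} ∏_{j∈f} x_j`. -/
noncomputable def lamI (r : ℕ) (G : HG) (x : ℕ → ℝ) (i : ℕ) : ℝ :=
  (r.factorial : ℝ) * ∑ f ∈ link G i, ∏ j ∈ f, x j

/-- `G` is a blowup of `L`. -/
def IsBlowup (L G : HG) : Prop :=
  ∃ V : ℕ → Finset ℕ,
    (∀ i ∈ hverts L, ∀ j ∈ hverts L, i ≠ j → Disjoint (V i) (V j)) ∧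
    ∀ e : Finset ℕ, e ∈ G ↔ ∃ f ∈ L, ∃ φ : ℕ → ℕ, (∀ i ∈ f, φ i ∈ V i) ∧ e = f.image φ

/-- `G` contains an `s`-sunflower with kernel `D`. -/
def HasSunflower (G : HG) (D : Finset ℕ) (s : ℕ) : Prop :=
  ∃ S : Finset (Finset ℕ), S ⊆ G ∧ S.card = s ∧ (∀ A ∈ S, D ⊆ A) ∧
    ∀ A ∈ S, ∀ B ∈ S, A ≠ B → A ∩ B = D

/-- `F` covers pairs: every pair of vertices of `F` lies in some edge. -/
def CoversPairs (F : HG) : Prop :=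
  ∀ u ∈ hverts F, ∀ v ∈ hverts F, u ≠ v → Covered F u v

/-- `d(G)`: the maximum average degree among nonempty subgraphs of `G`. -/
noncomputable def maxAvgDeg (G : HG) : ℝ :=
  sSup {v : ℝ | ∃ H : HG, H ⊆ G ∧ H.Nonempty ∧ v = 2 * (H.card : ℝ) / ((hverts H).card : ℝ)}

/-- Symmetrizing `v` to `u`: remove all edges containing `v` and replace them
with `{D ∪ {v} : D ∈ L_G(u)}`. -/
def symmetrize (G : HG) (u v : ℕ) : HG :=
  G.filter (fun e => v ∉ e) ∪ (G.filter (fun e => u ∈ e)).image (fun e => insert v (e.erase u))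

/-- The noncomplete transversals of an `m`-partite `r`-graph `L` with parts `A`. -/
noncomputable def noncompTrans (r m : ℕ) (L : HG) (A : Fin m → Finset ℕ) : Finset (Finset ℕ) :=
  ((Finset.univ.biUnion A).powerset).filter
    (fun S => (∀ i, (S ∩ A i).card = 1) ∧ ∃ e : Finset ℕ, e ⊆ S ∧ e.card = r ∧ e ∉ L)

private lemma mem_symm {G : HG} {u v : ℕ} {e : Finset ℕ} :
    e ∈ symmetrize G u v ↔ (e ∈ G ∧ v ∉ e) ∨ ∃ d ∈ G, u ∈ d ∧ e = insert v (d.erase u) := by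
  unfold symmetrize
  simp only [Finset.mem_union, Finset.mem_filter, Finset.mem_image]
  constructor
  · rintro (h | ⟨d, ⟨hd, hud⟩, rfl⟩)
    · exact Or.inl h
    · exact Or.inr ⟨d, hd, hud, rfl⟩
  · rintro (h | ⟨d, hd, hud, rfl⟩)
    · exact Or.inl h
    · exact Or.inr ⟨d, ⟨hd, hud⟩, rfl⟩

private lemma mem_hverts {G : HG} {x : ℕ} : x ∈ hverts G ↔ ∃ e ∈ G, x ∈ e := by
  unfold hverts
  simp [Finset.mem_sup]

/-- Symmetrization preserves `ℋ^F_p`-freeness. -/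
theorem stmt_0 (p r : ℕ) (hr : 0 < r) (hp : r + 1 ≤ p)
    (F : HG) (hF : Uniform r F) (hFn : (hverts F).card ≤ p)
    (G : HG) (hG : Uniform r G) (hGfree : ¬ ContainsHFam F p G)
    (u v : ℕ) (huv : u ≠ v) (hnonadj : ¬ Covered G u v) :
    ¬ ContainsHFam F p (symmetrize G u v) := by
  rintro ⟨C, hCcard, hcopy, hcov⟩
  -- no edge of G containing u contains v
  have hvd : ∀ d ∈ G, u ∈ d → v ∉ d := fun d hd hud hvd => hnonadj ⟨d, hd, hud, hvd⟩
  by_cases hvC : v ∈ C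
  · by_cases huC : u ∈ C
    · -- both u, v ∈ C : pair {u,v} cannot be covered in G'
      obtain ⟨e, he, hue, hve⟩ := hcov u huC v hvC huv
      rcases mem_symm.1 he with ⟨_, hve'⟩ | ⟨d, hdG, hud, rfl⟩
      · exact hve' hve
      · rcases Finset.mem_insert.1 hue with h | h
        · exact huv h
        · exact (Finset.mem_erase.1 h).1 rfl
    · -- v ∈ C, u ∉ C : replace v by u
      apply hGfree
      set τ : ℕ → ℕ := fun x => if x = v then u else x with hτ
      have hτinj : ∀ a ∈ C, ∀ b ∈ C, τ a = τ b → a = b := by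
        intro a ha b hb hab
        simp only [hτ] at hab
        split_ifs at hab with h1 h2 h2
        · rw [h1, h2]
        · exact absurd (hab.symm ▸ hb) huC
        · exact absurd (hab ▸ ha) huC
        · exact hab
      -- covering helper: pairs {b, ·} with b ∈ C, b ≠ v give edges of G through u
      have hcov2 : ∀ b ∈ C, b ≠ v → ∃ d ∈ G, u ∈ d ∧ b ∈ d := by
        intro b hb hbv
        obtain ⟨e, he, hve, hbe⟩ := hcov v hvC b hb (Ne.symm hbv)
        rcases mem_symm.1 he with ⟨_, hve'⟩ | ⟨d, hdG, hud, rfl⟩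
        · exact absurd hve hve'
        · refine ⟨d, hdG, hud, ?_⟩
          rcases Finset.mem_insert.1 hbe with h | h
          · exact absurd h hbv
          · exact Finset.mem_of_mem_erase h
      refine ⟨insert u (C.erase v), ?_, ?_, ?_⟩
      · rw [Finset.card_insert_of_notMem (fun h => huC (Finset.mem_of_mem_erase h)),
          Finset.card_erase_of_mem hvC, hCcard]
        omega
      · -- copy of F
        obtain ⟨φ, hinj, hmap⟩ := hcopy
        have hφC : ∀ x ∈ hverts F, φ x ∈ C := by
          intro x hx
          obtain ⟨e, heF, hxe⟩ := mem_hverts.1 hx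
          have := hmap e heF
          rw [induced, Finset.mem_filter] at this
          exact this.2 (Finset.mem_image_of_mem φ hxe)
        refine ⟨τ ∘ φ, ?_, ?_⟩
        · intro x hx y hy hxy
          exact hinj hx hy (hτinj _ (hφC x hx) _ (hφC y hy) hxy)
        · intro e heF
          have he' := hmap e heF
          rw [induced, Finset.mem_filter] at he'
          obtain ⟨he'G, he'C⟩ := he'
          have himg : e.image (τ ∘ φ) = (e.image φ).image τ :=
            (Finset.image_image).symm
          rw [induced, Finset.mem_filter, himg]
          rcases mem_symm.1 he'G with ⟨heG, hve⟩ | ⟨d, hdG, hud, hde⟩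
          · -- v ∉ e.image φ : τ acts as identity
            have hid : (e.image φ).image τ = e.image φ := by
              apply Finset.image_congr ?_ |>.trans (Finset.image_id)
              intro x hx
              simp only [hτ, if_neg (fun h : x = v => hve (h ▸ hx)), id]
            rw [hid]
            exact ⟨heG, fun x hx => Finset.mem_insert_of_mem
              (Finset.mem_erase.2 ⟨fun h => hve (h ▸ hx), he'C hx⟩)⟩
          · -- v ∈ e.image φ = insert v (d.erase u)
            have hvnd : v ∉ d := hvd d hdG hud
            have hvndu : v ∉ d.erase u := fun h => hvnd (Finset.mem_of_mem_erase h)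
            have hid : (d.erase u).image τ = d.erase u := by
              apply Finset.image_congr ?_ |>.trans (Finset.image_id)
              intro x hx
              simp only [hτ, if_neg (fun h : x = v => hvndu (h ▸ hx)), id]
            have : (e.image φ).image τ = d := by
              rw [hde, Finset.image_insert, hid]
              simp only [hτ, if_pos rfl]
              exact Finset.insert_erase hud
            rw [this]
            refine ⟨hdG, ?_⟩
            intro x hxd
            by_cases hxu : x = u
            · rw [hxu]; exact Finset.mem_insert_self u _
            · refine Finset.mem_insert_of_mem (Finset.mem_erase.2 ⟨?_, ?_⟩)
              · intro h; exact hvnd (h ▸ hxd)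
              · have : x ∈ insert v (d.erase u) :=
                  Finset.mem_insert_of_mem (Finset.mem_erase.2 ⟨hxu, hxd⟩)
                exact he'C (hde ▸ this)
      · -- covering in new core
        intro a ha b hb hab
        rcases Finset.mem_insert.1 ha with rfl | ha' <;>
          rcases Finset.mem_insert.1 hb with hb' | hb'
        · exact absurd hb'.symm hab
        · obtain ⟨hbv, hbC⟩ := Finset.mem_erase.1 hb'
          obtain ⟨d, hdG, hud, hbd⟩ := hcov2 b hbC hbv
          exact ⟨d, hdG, hud, hbd⟩
        · obtain ⟨hav, haC⟩ := Finset.mem_erase.1 ha'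
          obtain ⟨d, hdG, hud, had⟩ := hcov2 a haC hav
          exact ⟨d, hdG, had, hb' ▸ hud⟩
        · obtain ⟨hav, haC⟩ := Finset.mem_erase.1 ha'
          obtain ⟨hbv, hbC⟩ := Finset.mem_erase.1 hb'
          obtain ⟨e, he, hae, hbe⟩ := hcov a haC b hbC hab
          rcases mem_symm.1 he with ⟨heG, _⟩ | ⟨d, hdG, hud, rfl⟩
          · exact ⟨e, heG, hae, hbe⟩
          · refine ⟨d, hdG, ?_, ?_⟩
            · rcases Finset.mem_insert.1 hae with h | h
              · exact absurd h hav
              · exact Finset.mem_of_mem_erase h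
            · rcases Finset.mem_insert.1 hbe with h | h
              · exact absurd h hbv
              · exact Finset.mem_of_mem_erase h
  · -- v ∉ C : C is already a core in G
    apply hGfree
    refine ⟨C, hCcard, ?_, ?_⟩
    · obtain ⟨φ, hinj, hmap⟩ := hcopy
      refine ⟨φ, hinj, fun e he => ?_⟩
      have := hmap e he
      rw [induced, Finset.mem_filter] at this ⊢
      refine ⟨?_, this.2⟩
      rcases mem_symm.1 this.1 with ⟨hG', _⟩ | ⟨d, _, _, hde⟩
      · exact hG'
      · exact absurd (this.2 (hde ▸ Finset.mem_insert_self v _)) hvC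
    · intro a ha b hb hab
      obtain ⟨e, he, hae, hbe⟩ := hcov a ha b hb hab
      rcases mem_symm.1 he with ⟨hG', _⟩ | ⟨d, hdG, hud, rfl⟩
      · exact ⟨e, hG', hae, hbe⟩
      · refine ⟨d, hdG, ?_, ?_⟩
        · rcases Finset.mem_insert.1 hae with h | h
          · exact absurd (h ▸ ha) hvC
          · exact Finset.mem_of_mem_erase h
        · rcases Finset.mem_insert.1 hbe with h | h
          · exact absurd (h ▸ hb) hvC
          · exact Finset.mem_of_mem_erase h
end

section
/- If F is an r-graph that covers pairs (every pair of its vertices lies in some edge), then the Turán density of F equals its Lagrangian density: π(F) = π_λ(F). -/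
open Finset
open scoped BigOperators Classical

section Aux

lemma edge_subset_hverts {G : HG} {e : Finset ℕ} (he : e ∈ G) : e ⊆ hverts G :=
  fun v hv => Finset.le_sup (f := id) he hv

lemma not_copy_empty {F : HG} (hne : F.Nonempty) : ¬ IsCopyIn F (∅ : HG) := by
  rintro ⟨φ, -, hmap⟩
  obtain ⟨e, he⟩ := hne
  exact absurd (hmap e he) (Finset.notMem_empty _)

/-- The set defining `exNum` is nonempty (contains 0) when `F` is nonempty. -/
lemma exNum_set_nonempty {r n : ℕ} {F : HG} (hne : F.Nonempty) :
    (0 : ℕ) ∈ {m : ℕ | ∃ G : HG, Uniform r G ∧ (∀ e ∈ G, e ⊆ Finset.range n) ∧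
      (¬ IsCopyIn F G) ∧ G.card = m} := by
  refine ⟨∅, ?_, ?_, not_copy_empty hne, rfl⟩
  · intro e he; exact absurd he (Finset.notMem_empty _)
  · intro e he; exact absurd he (Finset.notMem_empty _)

lemma exNum_set_bddAbove {r n : ℕ} (P : HG → Prop) :
    BddAbove {m : ℕ | ∃ G : HG, Uniform r G ∧ (∀ e ∈ G, e ⊆ Finset.range n) ∧
      P G ∧ G.card = m} := by
  refine ⟨n.choose r, ?_⟩
  rintro m ⟨G, hu, hsub, -, rfl⟩
  have hG : G ⊆ (Finset.range n).powersetCard r := by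
    intro e he
    rw [Finset.mem_powersetCard]
    exact ⟨hsub e he, hu e he⟩
  calc G.card ≤ ((Finset.range n).powersetCard r).card := Finset.card_le_card hG
    _ = n.choose r := by simp [Finset.card_powersetCard]

lemma exNum_mem {r n : ℕ} {F : HG} (hne : F.Nonempty) :
    ∃ G : HG, Uniform r G ∧ (∀ e ∈ G, e ⊆ Finset.range n) ∧ (¬ IsCopyIn F G) ∧
      G.card = exNum r n (fun G => ¬ IsCopyIn F G) :=
  Nat.sSup_mem ⟨0, exNum_set_nonempty hne⟩ (exNum_set_bddAbove _)

lemma le_exNum {r n : ℕ} {F : HG} {G : HG} (hu : Uniform r G)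
    (hsub : ∀ e ∈ G, e ⊆ Finset.range n) (hfree : ¬ IsCopyIn F G) :
    G.card ≤ exNum r n (fun G => ¬ IsCopyIn F G) :=
  le_csSup (exNum_set_bddAbove _) ⟨G, hu, hsub, hfree, rfl⟩

/-- Key a priori bound on the Lagrangian polynomial. -/
lemma pPoly_le {r : ℕ} {G : HG} {x : ℕ → ℝ} (hx : ∀ i, 0 ≤ x i)
    (hs : (∑ i ∈ hverts G, x i) = 1) : pPoly r G x ≤ (r.factorial : ℝ) * 3 := by
  have h1 : ∑ e ∈ G, ∏ i ∈ e, x i ≤ ∑ t ∈ (hverts G).powerset, ∏ i ∈ t, x i := by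
    apply Finset.sum_le_sum_of_subset_of_nonneg
    · intro e he; exact Finset.mem_powerset.mpr (edge_subset_hverts he)
    · intro t _ _; exact Finset.prod_nonneg fun i _ => hx i
  have h2 : ∑ t ∈ (hverts G).powerset, ∏ i ∈ t, x i = ∏ i ∈ hverts G, (x i + 1) := by
    rw [Finset.prod_add]
    simp
  have h3 : ∏ i ∈ hverts G, (x i + 1) ≤ 3 := by
    calc ∏ i ∈ hverts G, (x i + 1) ≤ ∏ i ∈ hverts G, Real.exp (x i) := by
          apply Finset.prod_le_prod
          · intro i _; have := hx i; linarith
          · intro i _; exact Real.add_one_le_exp (x i)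
      _ = Real.exp (∑ i ∈ hverts G, x i) := (Real.exp_sum _ _).symm
      _ = Real.exp 1 := by rw [hs]
      _ ≤ 3 := by have := Real.exp_one_lt_d9; linarith
  have hfac : (0:ℝ) ≤ (r.factorial : ℝ) := by positivity
  calc pPoly r G x = (r.factorial : ℝ) * ∑ e ∈ G, ∏ i ∈ e, x i := rfl
    _ ≤ (r.factorial : ℝ) * 3 := by
        apply mul_le_mul_of_nonneg_left _ hfac
        calc ∑ e ∈ G, ∏ i ∈ e, x i ≤ ∏ i ∈ hverts G, (x i + 1) := h2 ▸ h1
          _ ≤ 3 := h3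

lemma lagrangian_set_bddAbove (r : ℕ) (G : HG) :
    BddAbove {v : ℝ | ∃ x : ℕ → ℝ, (∀ i, 0 ≤ x i) ∧ (∑ i ∈ hverts G, x i) = 1 ∧
      v = pPoly r G x} := by
  refine ⟨(r.factorial : ℝ) * 3, ?_⟩
  rintro v ⟨x, hx, hs, rfl⟩
  exact pPoly_le hx hs

lemma lagrangian_le (r : ℕ) (G : HG) : lagrangian r G ≤ (r.factorial : ℝ) * 3 := by
  apply Real.sSup_le
  · rintro v ⟨x, hx, hs, rfl⟩; exact pPoly_le hx hs
  · positivity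

lemma pPoly_le_lagrangian {r : ℕ} {G : HG} {x : ℕ → ℝ} (hx : ∀ i, 0 ≤ x i)
    (hs : (∑ i ∈ hverts G, x i) = 1) : pPoly r G x ≤ lagrangian r G :=
  le_csSup (lagrangian_set_bddAbove r G) ⟨x, hx, hs, rfl⟩

lemma lagrangian_empty (r : ℕ) : lagrangian r (∅ : HG) = 0 := by
  have : {v : ℝ | ∃ x : ℕ → ℝ, (∀ i, 0 ≤ x i) ∧ (∑ i ∈ hverts (∅:HG), x i) = 1 ∧
      v = pPoly r (∅:HG) x} = ∅ := by
    ext v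
    simp only [Set.mem_setOf_eq, Set.mem_empty_iff_false, iff_false]
    rintro ⟨x, -, hs, -⟩
    simp [hverts] at hs
  rw [lagrangian, this, Real.sSup_empty]

lemma piLambda_set_bddAbove (r : ℕ) (F : HG) :
    BddAbove {v : ℝ | ∃ G : HG, Uniform r G ∧ ¬ IsCopyIn F G ∧ v = lagrangian r G} := by
  refine ⟨(r.factorial : ℝ) * 3, ?_⟩
  rintro v ⟨G, -, -, rfl⟩
  exact lagrangian_le r G

lemma lagrangian_le_piLambda {r : ℕ} {F G : HG} (hu : Uniform r G)
    (hfree : ¬ IsCopyIn F G) : lagrangian r G ≤ piLambda r F :=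
  le_csSup (piLambda_set_bddAbove r F) ⟨G, hu, hfree, rfl⟩

lemma piLambda_nonneg {r : ℕ} {F : HG} (hne : F.Nonempty) : 0 ≤ piLambda r F := by
  have h0 : (0:ℝ) = lagrangian r (∅ : HG) := (lagrangian_empty r).symm
  calc (0:ℝ) = lagrangian r (∅ : HG) := h0
    _ ≤ piLambda r F := lagrangian_le_piLambda (fun e he => absurd he (Finset.notMem_empty _))
        (not_copy_empty hne)


/-- Upper bound: `ex(n) * r! ≤ π_λ * n^r`. -/
lemma exNum_upper {r : ℕ} (hr : 0 < r) {F : HG} (hne : F.Nonempty) (n : ℕ) :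
    (exNum r n (fun G => ¬ IsCopyIn F G) : ℝ) * (r.factorial : ℝ) ≤
      piLambda r F * (n : ℝ) ^ r := by
  obtain ⟨G, hu, hsub, hfree, hcard⟩ := exNum_mem (r := r) (n := n) hne
  rw [← hcard]
  rcases G.eq_empty_or_nonempty with rfl | hGne
  · simp only [Finset.card_empty, Nat.cast_zero, zero_mul]
    exact mul_nonneg (piLambda_nonneg hne) (by positivity)
  · set s := hverts G with hs
    set k := s.card with hk
    obtain ⟨e0, he0⟩ := hGne
    have hks : 0 < k := by
      have : e0.card ≤ k := Finset.card_le_card (edge_subset_hverts he0)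
      have : 0 < e0.card := by rw [hu e0 he0]; exact hr
      omega
    have hkn : k ≤ n := by
      have hsr : s ⊆ Finset.range n := by
        intro v hv
        obtain ⟨e, he, hve⟩ := Finset.mem_sup.mp hv
        exact hsub e he hve
      calc k ≤ (Finset.range n).card := Finset.card_le_card hsr
        _ = n := Finset.card_range n
    set x : ℕ → ℝ := fun i => if i ∈ s then (k : ℝ)⁻¹ else 0 with hxdef
    have hx : ∀ i, 0 ≤ x i := by
      intro i; simp only [hxdef]; split <;> positivity
    have hsum : (∑ i ∈ s, x i) = 1 := by
      simp only [hxdef]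
      rw [Finset.sum_ite_of_true (fun i hi => hi), Finset.sum_const, nsmul_eq_mul]
      field_simp
      rfl
    have hpp : pPoly r G x = (G.card : ℝ) * (r.factorial : ℝ) * ((k:ℝ)⁻¹) ^ r := by
      simp only [pPoly]
      have : ∀ e ∈ G, ∏ i ∈ e, x i = ((k:ℝ)⁻¹) ^ r := by
        intro e he
        have hes : e ⊆ s := edge_subset_hverts he
        rw [Finset.prod_congr rfl (fun i hi => if_pos (hes hi)),
          Finset.prod_const, hu e he]
      rw [Finset.sum_congr rfl this, Finset.sum_const, nsmul_eq_mul]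
      ring
    have h1 : pPoly r G x ≤ piLambda r F :=
      le_trans (pPoly_le_lagrangian hx hsum) (lagrangian_le_piLambda hu hfree)
    have hkpos : (0:ℝ) < (k:ℝ) := by exact_mod_cast hks
    have h2 : (G.card : ℝ) * (r.factorial : ℝ) ≤ piLambda r F * (k:ℝ) ^ r := by
      have := mul_le_mul_of_nonneg_right h1 (le_of_lt (pow_pos hkpos r))
      rw [hpp] at this
      calc (G.card : ℝ) * (r.factorial : ℝ)
          = (G.card : ℝ) * (r.factorial : ℝ) * ((k:ℝ)⁻¹) ^ r * (k:ℝ) ^ r := by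
            rw [mul_assoc, ← mul_pow]
            field_simp
            simp
        _ ≤ piLambda r F * (k:ℝ) ^ r := this
    calc (G.card : ℝ) * (r.factorial : ℝ) ≤ piLambda r F * (k:ℝ) ^ r := h2
      _ ≤ piLambda r F * (n:ℝ) ^ r := by
          apply mul_le_mul_of_nonneg_left _ (piLambda_nonneg hne)
          exact pow_le_pow_left₀ (le_of_lt hkpos) (by exact_mod_cast hkn) r

lemma tendsto_pow_div_descFactorial (r : ℕ) :
    Filter.Tendsto (fun n : ℕ => (n : ℝ) ^ r / ((r.factorial : ℝ) * (n.choose r : ℝ)))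
      Filter.atTop (nhds 1) := by
  have hfac : ∀ i : ℕ, Filter.Tendsto (fun n : ℕ => (n : ℝ) / ((n : ℝ) - (i : ℝ)))
      Filter.atTop (nhds 1) := by
    intro i
    have h0 : Filter.Tendsto (fun n : ℕ => (i : ℝ) / (n : ℝ)) Filter.atTop (nhds 0) :=
      tendsto_const_div_atTop_nhds_zero_nat (i : ℝ)
    have h1 : Filter.Tendsto (fun n : ℕ => 1 - (i : ℝ) / (n : ℝ)) Filter.atTop (nhds 1) := by
      have := Filter.Tendsto.const_sub (1:ℝ) h0
      simpa using this
    have h2 : Filter.Tendsto (fun n : ℕ => (1 - (i : ℝ) / (n : ℝ))⁻¹) Filter.atTop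
        (nhds 1) := by
      have := h1.inv₀ (by norm_num)
      simpa using this
    apply h2.congr'
    filter_upwards [Filter.eventually_ge_atTop (i + 1)] with n hn
    have hni : (i : ℝ) < (n : ℝ) := by exact_mod_cast hn
    have hnz : (n : ℝ) ≠ 0 := ne_of_gt (lt_of_le_of_lt (Nat.cast_nonneg i) hni)
    field_simp
  have hprod : Filter.Tendsto (fun n : ℕ => ∏ i ∈ Finset.range r, ((n : ℝ) / ((n:ℝ) - (i:ℝ))))
      Filter.atTop (nhds 1) := by
    have := tendsto_finset_prod (Finset.range r)
      (fun i _ => hfac i)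
    simpa using this
  apply hprod.congr'
  filter_upwards [Filter.eventually_ge_atTop r] with n hn
  have hdf : (r.factorial : ℝ) * (n.choose r : ℝ) = ∏ i ∈ Finset.range r, ((n:ℝ) - (i:ℝ)) := by
    have h1 : (r.factorial * n.choose r : ℕ) = n.descFactorial r :=
      (Nat.descFactorial_eq_factorial_mul_choose n r).symm
    have h2 : (n.descFactorial r : ℝ) = ∏ i ∈ Finset.range r, ((n:ℝ) - (i:ℝ)) := by
      rw [Nat.descFactorial_eq_prod_range]
      rw [Nat.cast_prod]
      apply Finset.prod_congr rfl
      intro i hi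
      have : i ≤ n := le_trans (le_of_lt (Finset.mem_range.mp hi)) hn
      exact Nat.cast_sub this
    rw [← h2, ← h1]
    push_cast
    ring
  rw [Finset.prod_div_distrib, Finset.prod_const, hdf, Finset.card_range]


/-- Counting the transversal edges mapping onto a fixed edge `e`. -/
lemma card_fiber {r n : ℕ} (idx : ℕ → ℕ) {e : Finset ℕ} (he : e.card = r) :
    (((Finset.range n).powersetCard r).filter (fun e' => e'.image idx = e)).card =
      ∏ v ∈ e, ((Finset.range n).filter (fun a => idx a = v)).card := by
  have key := Finset.card_bij
    (s := e.pi (fun v => (Finset.range n).filter (fun a => idx a = v)))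
    (t := ((Finset.range n).powersetCard r).filter (fun e' => e'.image idx = e))
    (fun g _ => e.attach.image (fun v => g v.1 v.2)) ?_ ?_ ?_
  · rw [← key, Finset.card_pi]
  · -- maps into t
    intro g hg
    simp only [Finset.mem_pi, Finset.mem_filter, Finset.mem_range] at hg
    have hidx : ∀ (v : ℕ) (hv : v ∈ e), idx (g v hv) = v := fun v hv => (hg v hv).2
    have hinjA : Set.InjOn (fun v : {x // x ∈ e} => g v.1 v.2) (e.attach : Set {x // x ∈ e}) := by
      intro a _ b _ hab
      have hab' : g a.1 a.2 = g b.1 b.2 := hab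
      have : idx (g a.1 a.2) = idx (g b.1 b.2) := by rw [hab']
      rw [hidx a.1 a.2, hidx b.1 b.2] at this
      exact Subtype.ext this
    have hcard : (e.attach.image (fun v => g v.1 v.2)).card = r := by
      rw [Finset.card_image_of_injOn hinjA, Finset.card_attach, he]
    have hsub : e.attach.image (fun v => g v.1 v.2) ⊆ Finset.range n := by
      intro a ha
      obtain ⟨v, hv, rfl⟩ := Finset.mem_image.mp ha
      exact Finset.mem_range.mpr (hg v.1 v.2).1
    have himg : (e.attach.image (fun v => g v.1 v.2)).image idx = e := by
      rw [Finset.image_image]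
      have : e.attach.image (fun v => idx (g v.1 v.2)) = e.attach.image (fun v => v.1) :=
        Finset.image_congr (fun v _ => hidx v.1 v.2)
      rw [Function.comp_def, this, Finset.attach_image_val]
    exact Finset.mem_filter.mpr ⟨Finset.mem_powersetCard.mpr ⟨hsub, hcard⟩, himg⟩
  · -- injective
    intro g₁ h₁ g₂ h₂ heq
    have heq' : e.attach.image (fun v => g₁ v.1 v.2) = e.attach.image (fun v => g₂ v.1 v.2) := heq
    funext a ha
    have hmem : g₁ a ha ∈ e.attach.image (fun v => g₂ v.1 v.2) := by
      rw [← heq']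
      exact Finset.mem_image.mpr ⟨⟨a, ha⟩, Finset.mem_attach _ _, rfl⟩
    obtain ⟨w, -, hw⟩ := Finset.mem_image.mp hmem
    have h1 : idx (g₁ a ha) = a := (Finset.mem_filter.mp (Finset.mem_pi.mp h₁ a ha)).2
    have h2 : idx (g₂ w.1 w.2) = w.1 := (Finset.mem_filter.mp (Finset.mem_pi.mp h₂ w.1 w.2)).2
    have hwa : w.1 = a := by rw [← h2, hw, h1]
    subst hwa
    exact hw.symm
  · -- surjective
    intro e' he'
    obtain ⟨hpc, himg⟩ := Finset.mem_filter.mp he'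
    obtain ⟨hsub, hcard⟩ := Finset.mem_powersetCard.mp hpc
    have hne : ∀ (v : ℕ), v ∈ e → (e'.filter (fun a => idx a = v)).Nonempty := by
      intro v hv
      rw [← himg] at hv
      obtain ⟨a, ha, rfl⟩ := Finset.mem_image.mp hv
      exact ⟨a, Finset.mem_filter.mpr ⟨ha, rfl⟩⟩
    refine ⟨fun v hv => (e'.filter (fun a => idx a = v)).min' (hne v hv), ?_, ?_⟩
    · rw [Finset.mem_pi]
      intro v hv
      have hmin := Finset.min'_mem (e'.filter (fun a => idx a = v)) (hne v hv)
      obtain ⟨hmem, hidx⟩ := Finset.mem_filter.mp hmin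
      exact Finset.mem_filter.mpr ⟨hsub hmem, hidx⟩
    · -- image equals e'
      have hsub2 : e.attach.image
          (fun v => (e'.filter (fun a => idx a = v.1)).min' (hne v.1 v.2)) ⊆ e' := by
        intro a ha
        obtain ⟨v, -, rfl⟩ := Finset.mem_image.mp ha
        exact (Finset.mem_filter.mp (Finset.min'_mem _ (hne v.1 v.2))).1
      apply Finset.eq_of_subset_of_card_le hsub2
      rw [hcard]
      have hinjA : Set.InjOn
          (fun v : {x // x ∈ e} => (e'.filter (fun a => idx a = v.1)).min' (hne v.1 v.2))
          (e.attach : Set {x // x ∈ e}) := by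
        intro a _ b _ hab
        have hab' : (e'.filter (fun x => idx x = a.1)).min' (hne a.1 a.2) =
            (e'.filter (fun x => idx x = b.1)).min' (hne b.1 b.2) := hab
        have ha' := (Finset.mem_filter.mp (Finset.min'_mem _ (hne a.1 a.2))).2
        have hb' := (Finset.mem_filter.mp (Finset.min'_mem _ (hne b.1 b.2))).2
        apply Subtype.ext
        rw [← ha', ← hb', hab']
      rw [Finset.card_image_of_injOn hinjA, Finset.card_attach, he]

/-- Counting the blowup. -/
lemma card_blowB {r n : ℕ} {G : HG} (hGu : Uniform r G) (idx : ℕ → ℕ) :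
    (((Finset.range n).powersetCard r).filter (fun e' => e'.image idx ∈ G)).card =
      ∑ e ∈ G, ∏ v ∈ e, ((Finset.range n).filter (fun a => idx a = v)).card := by
  have hfib := Finset.card_eq_sum_card_fiberwise
    (f := fun e' => e'.image idx)
    (s := ((Finset.range n).powersetCard r).filter (fun e' => e'.image idx ∈ G)) (t := G)
    (fun e' he' => (Finset.mem_filter.mp he').2)
  rw [hfib]
  apply Finset.sum_congr rfl
  intro e he
  rw [← card_fiber idx (hGu e he)]
  congr 1
  rw [Finset.filter_filter]
  apply Finset.filter_congr
  intro e' _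
  constructor
  · rintro ⟨-, h⟩; exact h
  · intro h; exact ⟨h ▸ he, h⟩

/-- A blowup of an `F`-free graph is `F`-free when `F` covers pairs. -/
lemma blowB_free {r n : ℕ} {F G : HG} (hGu : Uniform r G)
    (hcov : CoversPairs F) (hfree : ¬ IsCopyIn F G) (idx : ℕ → ℕ) :
    ¬ IsCopyIn F (((Finset.range n).powersetCard r).filter (fun e' => e'.image idx ∈ G)) := by
  rintro ⟨ψ, hinj, hmap⟩
  apply hfree
  refine ⟨idx ∘ ψ, ?_, ?_⟩
  · intro u hu v hv huv
    by_contra hne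
    have hne' : u ≠ v := fun h => hne (h ▸ rfl)
    obtain ⟨f, hf, huf, hvf⟩ := hcov u hu v hv hne'
    have hmem := hmap f hf
    obtain ⟨hpc, hG⟩ := Finset.mem_filter.mp hmem
    obtain ⟨-, hcard⟩ := Finset.mem_powersetCard.mp hpc
    have hcardG : ((f.image ψ).image idx).card = r := hGu _ hG
    have hidxinj : Set.InjOn idx ((f.image ψ) : Set (ℕ)) := by
      apply Finset.injOn_of_card_image_eq
      rw [hcardG, hcard]
    have hψu : ψ u ∈ f.image ψ := Finset.mem_image_of_mem ψ huf
    have hψv : ψ v ∈ f.image ψ := Finset.mem_image_of_mem ψ hvf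
    have hψne : ψ u ≠ ψ v := fun h => hne' (hinj hu hv h)
    exact hψne (hidxinj hψu hψv huv)
  · intro e heF
    have := hmap e heF
    obtain ⟨-, hG⟩ := Finset.mem_filter.mp this
    rw [Finset.image_image] at hG
    exact hG

/-- Building a labelling with prescribed fiber sizes. -/
lemma exists_idx (n : ℕ) (s : Finset ℕ) (m : ℕ → ℕ) (hm : ∑ v ∈ s, m v ≤ n) :
    ∃ idx : ℕ → ℕ, ∀ v ∈ s, ((Finset.range n).filter (fun a => idx a = v)).card = m v := by
  classical
  set o : ℕ → ℕ := fun v => ∑ w ∈ s.filter (· < v), m w with ho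
  have hlt : ∀ v ∈ s, ∀ w, v < w → o v + m v ≤ o w := by
    intro v hv w hvw
    have hsubs : insert v (s.filter (· < v)) ⊆ s.filter (· < w) := by
      intro u hu
      rcases Finset.mem_insert.mp hu with rfl | hu'
      · exact Finset.mem_filter.mpr ⟨hv, hvw⟩
      · obtain ⟨hus, huv⟩ := Finset.mem_filter.mp hu'
        exact Finset.mem_filter.mpr ⟨hus, lt_trans huv hvw⟩
    calc o v + m v = ∑ u ∈ insert v (s.filter (· < v)), m u := by
          rw [Finset.sum_insert (by simp), add_comm]
      _ ≤ ∑ u ∈ s.filter (· < w), m u := Finset.sum_le_sum_of_subset hsubs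
      _ = o w := rfl
  have hbound : ∀ v ∈ s, o v + m v ≤ n := by
    intro v hv
    have hsubs : insert v (s.filter (· < v)) ⊆ s := by
      intro u hu
      rcases Finset.mem_insert.mp hu with rfl | hu'
      · exact hv
      · exact (Finset.mem_filter.mp hu').1
    calc o v + m v = ∑ u ∈ insert v (s.filter (· < v)), m u := by
          rw [Finset.sum_insert (by simp), add_comm]
      _ ≤ ∑ u ∈ s, m u := Finset.sum_le_sum_of_subset hsubs
      _ ≤ n := hm
  have huniq : ∀ a : ℕ, ∀ v ∈ s, ∀ w ∈ s,
      (o v ≤ a ∧ a < o v + m v) → (o w ≤ a ∧ a < o w + m w) → v = w := by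
    intro a v hv w hw h1 h2
    by_contra hne
    rcases lt_or_gt_of_ne hne with h | h
    · have := hlt v hv w h; omega
    · have := hlt w hw v h; omega
  set junk : ℕ := (s.sup id) + 1 with hjunk
  have hjunks : ∀ v ∈ s, v ≠ junk := by
    intro v hv
    have : v ≤ s.sup id := Finset.le_sup (f := id) hv
    omega
  set idx : ℕ → ℕ := fun a =>
    if h : ∃ v, v ∈ s ∧ o v ≤ a ∧ a < o v + m v then h.choose else junk with hidx
  have hchar : ∀ a : ℕ, ∀ v ∈ s, (idx a = v ↔ (o v ≤ a ∧ a < o v + m v)) := by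
    intro a v hv
    constructor
    · intro hav
      by_cases h : ∃ u, u ∈ s ∧ o u ≤ a ∧ a < o u + m u
      · have hspec := h.choose_spec
        have : idx a = h.choose := dif_pos h
        rw [this] at hav
        rw [← hav]
        exact hspec.2
      · have : idx a = junk := dif_neg h
        rw [this] at hav
        exact absurd hav.symm (hjunks v hv)
    · intro hint
      have h : ∃ u, u ∈ s ∧ o u ≤ a ∧ a < o u + m u := ⟨v, hv, hint⟩
      have hspec := h.choose_spec
      have heq : idx a = h.choose := dif_pos h
      rw [heq]
      exact huniq a h.choose hspec.1 v hv hspec.2 hint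
  refine ⟨idx, ?_⟩
  intro v hv
  have : (Finset.range n).filter (fun a => idx a = v) = Finset.Ico (o v) (o v + m v) := by
    ext a
    simp only [Finset.mem_filter, Finset.mem_range, Finset.mem_Ico]
    constructor
    · rintro ⟨-, hav⟩
      exact (hchar a v hv).mp hav
    · intro hint
      exact ⟨lt_of_lt_of_le hint.2 (hbound v hv), (hchar a v hv).mpr hint⟩
  rw [this, Nat.card_Ico]
  omega


/-- Lower bound via blowups: `∑_e ∏ ⌊x_v n⌋ ≤ ex(n)`. -/
lemma exNum_lower {r : ℕ} {F G : HG} (hcov : CoversPairs F) (hGu : Uniform r G)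
    (hfree : ¬ IsCopyIn F G) {x : ℕ → ℝ} (hx : ∀ i, 0 ≤ x i)
    (hs : (∑ i ∈ hverts G, x i) = 1) (n : ℕ) :
    (∑ e ∈ G, ∏ v ∈ e, (⌊x v * (n:ℝ)⌋₊ : ℝ)) ≤
      (exNum r n (fun G => ¬ IsCopyIn F G) : ℝ) := by
  set m : ℕ → ℕ := fun v => ⌊x v * (n:ℝ)⌋₊ with hmdef
  have hm : ∑ v ∈ hverts G, m v ≤ n := by
    have hr : (∑ v ∈ hverts G, (m v : ℝ)) ≤ (n : ℝ) := by
      calc ∑ v ∈ hverts G, (m v : ℝ) ≤ ∑ v ∈ hverts G, x v * (n:ℝ) := by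
            apply Finset.sum_le_sum
            intro v _
            exact Nat.floor_le (mul_nonneg (hx v) (Nat.cast_nonneg n))
        _ = (n : ℝ) := by rw [← Finset.sum_mul, hs, one_mul]
    exact_mod_cast (by push_cast at hr ⊢; exact hr : ((∑ v ∈ hverts G, m v : ℕ) : ℝ) ≤ (n:ℝ))
  obtain ⟨idx, hidx⟩ := exists_idx n (hverts G) m hm
  set B : HG := ((Finset.range n).powersetCard r).filter (fun e' => e'.image idx ∈ G) with hB
  have hBu : Uniform r B := by
    intro e' he'
    exact (Finset.mem_powersetCard.mp (Finset.mem_filter.mp he').1).2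
  have hBsub : ∀ e' ∈ B, e' ⊆ Finset.range n := by
    intro e' he'
    exact (Finset.mem_powersetCard.mp (Finset.mem_filter.mp he').1).1
  have hBfree : ¬ IsCopyIn F B := blowB_free hGu hcov hfree idx
  have hle : B.card ≤ exNum r n (fun G => ¬ IsCopyIn F G) := le_exNum hBu hBsub hBfree
  have hcard : B.card = ∑ e ∈ G, ∏ v ∈ e, m v := by
    rw [hB, card_blowB hGu idx]
    apply Finset.sum_congr rfl
    intro e he
    apply Finset.prod_congr rfl
    intro v hv
    exact hidx v (edge_subset_hverts he hv)
  calc (∑ e ∈ G, ∏ v ∈ e, (m v : ℝ)) = (B.card : ℝ) := by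
        rw [hcard]; push_cast; ring
    _ ≤ (exNum r n (fun G => ¬ IsCopyIn F G) : ℝ) := by exact_mod_cast hle

lemma tendsto_floor_div (c : ℝ) (hc : 0 ≤ c) :
    Filter.Tendsto (fun n : ℕ => (⌊c * (n:ℝ)⌋₊ : ℝ) / (n:ℝ)) Filter.atTop (nhds c) := by
  have hlow : Filter.Tendsto (fun n : ℕ => c - 1 / (n:ℝ)) Filter.atTop (nhds c) := by
    have := (tendsto_one_div_atTop_nhds_zero_nat).const_sub c
    simpa using this
  apply tendsto_of_tendsto_of_tendsto_of_le_of_le' hlow tendsto_const_nhds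
  · filter_upwards [Filter.eventually_ge_atTop 1] with n hn
    have hn' : (0:ℝ) < (n:ℝ) := by exact_mod_cast hn
    have h1 : c * (n:ℝ) - 1 ≤ (⌊c * (n:ℝ)⌋₊ : ℝ) := le_of_lt (Nat.sub_one_lt_floor _)
    have h2 : (c * (n:ℝ) - 1) / (n:ℝ) ≤ (⌊c * (n:ℝ)⌋₊ : ℝ) / (n:ℝ) :=
      div_le_div_of_nonneg_right h1 hn'.le
    calc c - 1 / (n:ℝ) = (c * (n:ℝ) - 1) / (n:ℝ) := by field_simp
      _ ≤ (⌊c * (n:ℝ)⌋₊ : ℝ) / (n:ℝ) := h2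
  · filter_upwards [Filter.eventually_ge_atTop 1] with n hn
    have hn' : (0:ℝ) < (n:ℝ) := by exact_mod_cast hn
    have h1 : (⌊c * (n:ℝ)⌋₊ : ℝ) ≤ c * (n:ℝ) :=
      Nat.floor_le (mul_nonneg hc (Nat.cast_nonneg n))
    calc (⌊c * (n:ℝ)⌋₊ : ℝ) / (n:ℝ) ≤ c * (n:ℝ) / (n:ℝ) :=
          div_le_div_of_nonneg_right h1 hn'.le
      _ = c := by field_simp

end Aux

/-- If `F` covers pairs then `π(F) = π_λ(F)`. -/
theorem stmt_2 (r : ℕ) (hr : 0 < r) (F : HG) (hF : Uniform r F) (hcov : CoversPairs F) :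
    Filter.Tendsto
      (fun n => (exNum r n (fun G => ¬ IsCopyIn F G) : ℝ) / (n.choose r : ℝ))
      Filter.atTop (nhds (piLambda r F)) := by
  classical
  rcases F.eq_empty_or_nonempty with rfl | hne
  · -- degenerate case F = ∅
    have hcopy : ∀ G : HG, IsCopyIn (∅ : HG) G := by
      intro G
      refine ⟨id, ?_, ?_⟩
      · intro a ha
        simp [hverts] at ha
      · intro e he; exact absurd he (Finset.notMem_empty _)
    have hex : ∀ n, exNum r n (fun G => ¬ IsCopyIn (∅:HG) G) = 0 := by
      intro n
      have hE : {m : ℕ | ∃ G : HG, Uniform r G ∧ (∀ e ∈ G, e ⊆ Finset.range n) ∧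
          (¬ IsCopyIn (∅:HG) G) ∧ G.card = m} = ∅ := by
        ext m
        simp only [Set.mem_setOf_eq, Set.mem_empty_iff_false, iff_false]
        rintro ⟨G, -, -, hf, -⟩
        exact hf (hcopy G)
      show sSup _ = 0
      rw [hE]
      simp
    have hpi : piLambda r (∅:HG) = 0 := by
      have hE : {v : ℝ | ∃ G : HG, Uniform r G ∧ ¬ IsCopyIn (∅:HG) G ∧ v = lagrangian r G}
          = ∅ := by
        ext v
        simp only [Set.mem_setOf_eq, Set.mem_empty_iff_false, iff_false]
        rintro ⟨G, -, hf, -⟩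
        exact hf (hcopy G)
      show sSup _ = 0
      rw [hE, Real.sSup_empty]
    rw [hpi]
    have heq : (fun n : ℕ => ((exNum r n (fun G => ¬ IsCopyIn (∅:HG) G) : ℝ)) /
        (n.choose r : ℝ)) = fun _ => (0:ℝ) := by
      funext n; rw [hex n]; simp
    rw [heq]
    exact tendsto_const_nhds
  · set π := piLambda r F with hπdef
    rw [Metric.tendsto_atTop]
    intro ε hε
    have hfac : (0:ℝ) < (r.factorial : ℝ) := by exact_mod_cast r.factorial_pos
    -- upper bound, eventually
    have hg : Filter.Tendsto
        (fun n : ℕ => π * ((n:ℝ)^r / ((r.factorial:ℝ) * (n.choose r : ℝ))))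
        Filter.atTop (nhds π) := by
      have := (tendsto_pow_div_descFactorial r).const_mul π
      simpa using this
    have hup : ∀ᶠ n : ℕ in Filter.atTop,
        (exNum r n (fun G => ¬ IsCopyIn F G) : ℝ) / (n.choose r : ℝ) < π + ε := by
      have h1 : ∀ᶠ n : ℕ in Filter.atTop,
          π * ((n:ℝ)^r / ((r.factorial:ℝ) * (n.choose r : ℝ))) < π + ε :=
        hg.eventually_lt_const (by linarith)
      filter_upwards [h1, Filter.eventually_ge_atTop r] with n h1n hn
      have hC : (0:ℝ) < (n.choose r : ℝ) := by exact_mod_cast Nat.choose_pos hn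
      have h2 := exNum_upper hr hne n
      rw [← hπdef] at h2
      have h3 : (exNum r n (fun G => ¬ IsCopyIn F G) : ℝ) / (n.choose r : ℝ)
          ≤ π * ((n:ℝ)^r / ((r.factorial:ℝ) * (n.choose r : ℝ))) := by
        rw [div_le_iff₀ hC]
        have h4 : π * ((n:ℝ)^r / ((r.factorial:ℝ) * (n.choose r:ℝ))) * (n.choose r:ℝ)
            = π * (n:ℝ)^r / (r.factorial:ℝ) := by
          field_simp
        rw [h4, le_div_iff₀ hfac]
        exact h2
      linarith
    -- lower bound, eventually
    have hlow : ∀ᶠ n : ℕ in Filter.atTop,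
        π - ε < (exNum r n (fun G => ¬ IsCopyIn F G) : ℝ) / (n.choose r : ℝ) := by
      have hSne : {v : ℝ | ∃ G : HG, Uniform r G ∧ ¬ IsCopyIn F G ∧
          v = lagrangian r G}.Nonempty :=
        ⟨lagrangian r (∅:HG), ∅, fun e he => absurd he (Finset.notMem_empty _),
          not_copy_empty hne, rfl⟩
      have hrfl : π = sSup {v : ℝ | ∃ G : HG, Uniform r G ∧ ¬ IsCopyIn F G ∧
          v = lagrangian r G} := hπdef
      obtain ⟨w, hwS, hw⟩ := exists_lt_of_lt_csSup hSne
        (show π - ε/2 < sSup {v : ℝ | ∃ G : HG, Uniform r G ∧ ¬ IsCopyIn F G ∧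
          v = lagrangian r G} by rw [← hrfl]; linarith)
      obtain ⟨G, hGu, hGfree, rfl⟩ := hwS
      have hrfl2 : lagrangian r G = sSup {v : ℝ | ∃ x : ℕ → ℝ, (∀ i, 0 ≤ x i) ∧
          (∑ i ∈ hverts G, x i) = 1 ∧ v = pPoly r G x} := rfl
      rcases Set.eq_empty_or_nonempty {v : ℝ | ∃ x : ℕ → ℝ, (∀ i, 0 ≤ x i) ∧
          (∑ i ∈ hverts G, x i) = 1 ∧ v = pPoly r G x} with hSG | hSG
      · have h0 : lagrangian r G = 0 := by rw [hrfl2, hSG, Real.sSup_empty]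
        rw [h0] at hw
        filter_upwards [Filter.eventually_ge_atTop r] with n hn
        have hf0 : (0:ℝ) ≤ (exNum r n (fun G => ¬ IsCopyIn F G) : ℝ) / (n.choose r : ℝ) :=
          div_nonneg (Nat.cast_nonneg _) (Nat.cast_nonneg _)
        linarith
      · obtain ⟨p, hpS, hp⟩ := exists_lt_of_lt_csSup hSG (by rw [← hrfl2]; exact hw)
        obtain ⟨x, hx, hxs, rfl⟩ := hpS
        have hq : Filter.Tendsto (fun n : ℕ => (r.factorial : ℝ) *
            ∑ e ∈ G, ∏ v ∈ e, ((⌊x v * (n:ℝ)⌋₊ : ℝ) / (n:ℝ)))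
            Filter.atTop (nhds (pPoly r G x)) := by
          have hsum : Filter.Tendsto
              (fun n : ℕ => ∑ e ∈ G, ∏ v ∈ e, ((⌊x v * (n:ℝ)⌋₊:ℝ)/(n:ℝ)))
              Filter.atTop (nhds (∑ e ∈ G, ∏ v ∈ e, x v)) := by
            apply tendsto_finset_sum
            intro e _
            exact tendsto_finset_prod e (fun v _ => tendsto_floor_div (x v) (hx v))
          exact hsum.const_mul (r.factorial : ℝ)
        have hev1 : ∀ᶠ n : ℕ in Filter.atTop,
            π - ε < (r.factorial : ℝ) * ∑ e ∈ G, ∏ v ∈ e, ((⌊x v * (n:ℝ)⌋₊ : ℝ) / (n:ℝ)) :=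
          hq.eventually_const_lt (by linarith)
        filter_upwards [hev1, Filter.eventually_ge_atTop (max r 1)] with n h1n hn
        have hnr : r ≤ n := le_trans (le_max_left _ _) hn
        have hn1 : 1 ≤ n := le_trans (le_max_right _ _) hn
        have hnpos : (0:ℝ) < (n:ℝ) := by exact_mod_cast hn1
        have hC : (0:ℝ) < (n.choose r : ℝ) := by exact_mod_cast Nat.choose_pos hnr
        set T : ℝ := ∑ e ∈ G, ∏ v ∈ e, (⌊x v * (n:ℝ)⌋₊ : ℝ) with hT
        have hTnn : 0 ≤ T := by
          rw [hT]
          apply Finset.sum_nonneg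
          intro e _
          exact Finset.prod_nonneg (fun v _ => Nat.cast_nonneg _)
        have hqeq : (r.factorial : ℝ) * ∑ e ∈ G, ∏ v ∈ e, ((⌊x v * (n:ℝ)⌋₊ : ℝ) / (n:ℝ))
            = (r.factorial : ℝ) * T / (n:ℝ)^r := by
          have he1 : ∀ e ∈ G, ∏ v ∈ e, ((⌊x v * (n:ℝ)⌋₊:ℝ)/(n:ℝ))
              = (∏ v ∈ e, (⌊x v * (n:ℝ)⌋₊:ℝ))/(n:ℝ)^r := by
            intro e he
            rw [Finset.prod_div_distrib, Finset.prod_const, hGu e he]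
          rw [Finset.sum_congr rfl he1, ← Finset.sum_div, hT, mul_div_assoc]
        have hTex : T ≤ (exNum r n (fun G => ¬ IsCopyIn F G) : ℝ) := by
          rw [hT]
          exact exNum_lower hcov hGu hGfree hx hxs n
        have hdesc : (r.factorial : ℝ) * (n.choose r : ℝ) ≤ (n:ℝ)^r := by
          have h5 : r.factorial * n.choose r ≤ n ^ r := by
            rw [← Nat.descFactorial_eq_factorial_mul_choose]
            exact Nat.descFactorial_le_pow n r
          exact_mod_cast h5
        have hstep1 : (r.factorial : ℝ) * T / (n:ℝ)^r ≤ T / (n.choose r : ℝ) := by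
          rw [div_le_div_iff₀ (by positivity) hC]
          nlinarith [hTnn, hC]
        have hstep2 : T / (n.choose r : ℝ) ≤
            (exNum r n (fun G => ¬ IsCopyIn F G) : ℝ) / (n.choose r : ℝ) :=
          div_le_div_of_nonneg_right hTex hC.le
        rw [hqeq] at h1n
        linarith
    obtain ⟨N, hN⟩ := Filter.eventually_atTop.mp (hup.and hlow)
    refine ⟨N, fun n hn => ?_⟩
    obtain ⟨h1, h2⟩ := hN n hn
    rw [Real.dist_eq, abs_sub_lt_iff]
    constructor <;> linarith
end

section
/- Let G be an r-graph on [n] and let p, d be positive integers with d < r. Then there exists a subgraph G' of G with |G'| ≥ |G| − p·C(n,d)·C(n,r−d−1) such that for every d-set D of vertices, if d_{G'}(D) > 0 then the kernel degree d*_{G'}(D) > p. -/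
open Finset
open scoped BigOperators Classical

section Machinery

lemma spread_lemma (k s : ℕ) (hk : 0 < k) :
    ∀ n, k * (s+1) ≤ n → ∀ P : Finset ℕ, P ⊆ range n → k * s + 1 ≤ P.card →
    ∃ Q ⊆ P, Q.card = s + 1 ∧
      ∀ a ∈ Q, ∀ b ∈ Q, a < b → a + k ≤ b ∧ b + k ≤ n + a := by
  intro n
  induction n using Nat.strong_induction_on with
  | _ n ih =>
    intro hn P hPn hPcard
    have hks : k * (s+1) = k * s + k := by ring
    by_cases hcase : n < P.card + k
    · -- dense case: residue classes
      set M : Finset ℕ := range n \ P with hM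
      have hMcard : M.card + P.card = n := by
        rw [hM, card_sdiff_of_subset hPn, card_range]
        have := card_le_card hPn
        simp [card_range] at this
        omega
      have hMk : M.card < k := by omega
      set R : Finset ℕ := M.image (· % k) with hR
      have hRk : R ⊆ range k := by
        intro x hx
        simp only [hR, mem_image] at hx
        obtain ⟨y, _, rfl⟩ := hx
        simp [Nat.mod_lt _ hk]
      have hRcard : R.card < (range k).card := by
        calc R.card ≤ M.card := card_image_le
        _ < k := hMk
        _ = (range k).card := (card_range k).symm
      obtain ⟨j, hjk, hjR⟩ : ∃ j ∈ range k, j ∉ R := by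
        by_contra h
        push_neg at h
        have : range k ⊆ R := h
        have := card_le_card this
        omega
      simp only [mem_range] at hjk
      refine ⟨(range (s+1)).image (fun i => j + i * k), ?_, ?_, ?_⟩
      · intro x hx
        simp only [mem_image, mem_range] at hx
        obtain ⟨i, hi, rfl⟩ := hx
        have hxn : j + i * k < n := by
          have : i * k ≤ s * k := Nat.mul_le_mul_right k (by omega)
          have : k * (s+1) = s * k + k := by ring
          omega
        have hxM : j + i * k ∉ M := by
          intro hmem
          apply hjR
          simp only [hR, mem_image]
          exact ⟨j + i * k, hmem, by simp [Nat.add_mul_mod_self_right, Nat.mod_eq_of_lt hjk]⟩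
        simp only [hM, mem_sdiff, mem_range] at hxM
        tauto
      · rw [card_image_of_injOn, card_range]
        intro a _ b _ h
        have h' : j + a * k = j + b * k := h
        exact Nat.eq_of_mul_eq_mul_right hk (by omega)
      · intro a ha b hb hab
        simp only [mem_image, mem_range] at ha hb
        obtain ⟨i1, hi1, rfl⟩ := ha
        obtain ⟨i2, hi2, rfl⟩ := hb
        have h12 : i1 < i2 := by
          by_contra h
          push_neg at h
          have := Nat.mul_le_mul_right k h
          omega
        constructor
        · have : (i1 + 1) * k ≤ i2 * k := Nat.mul_le_mul_right k (by omega)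
          nlinarith
        · have h2 : (i2 + 1) * k ≤ (s + 1) * k := Nat.mul_le_mul_right k (by omega)
          have : k * (s+1) = (s+1) * k := by ring
          nlinarith
    · -- sparse case: contract a missing point
      push_neg at hcase
      have hPltn : P.card < n := by omega
      obtain ⟨x, hxn, hxP⟩ : ∃ x ∈ range n, x ∉ P := by
        rw [← Finset.not_subset]
        intro h
        have := card_le_card h
        simp [card_range] at this
        omega
      simp only [mem_range] at hxn
      have hn1 : k * (s+1) ≤ n - 1 := by omega
      set φ : ℕ → ℕ := fun y => if y < x then y else y - 1 with hφ
      have hφinj : Set.InjOn φ ↑P := by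
        intro a ha b hb h
        have ha' : a ≠ x := fun h' => hxP (h' ▸ ha)
        have hb' : b ≠ x := fun h' => hxP (h' ▸ hb)
        simp only [hφ] at h
        split_ifs at h <;> omega
      set P' : Finset ℕ := P.image φ with hP'
      have hP'n : P' ⊆ range (n-1) := by
        intro z hz
        simp only [hP', mem_image] at hz
        obtain ⟨y, hy, rfl⟩ := hz
        have := hPn hy
        simp only [mem_range] at this ⊢
        have hy' : y ≠ x := fun h' => hxP (h' ▸ hy)
        simp only [hφ]
        split_ifs <;> omega
      have hP'card : k * s + 1 ≤ P'.card := by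
        rw [hP', card_image_of_injOn hφinj]; exact hPcard
      obtain ⟨Q', hQ'P, hQ'card, hQ'spread⟩ := ih (n-1) (by omega) hn1 P' hP'n hP'card
      set ψ : ℕ → ℕ := fun z => if z < x then z else z + 1 with hψ
      have hkey : ∀ z ∈ Q', ψ z ∈ P := by
        intro z hz
        have hz' := hQ'P hz
        simp only [hP', mem_image] at hz'
        obtain ⟨y, hy, rfl⟩ := hz'
        have hy' : y ≠ x := fun h' => hxP (h' ▸ hy)
        have : ψ (φ y) = y := by
          simp only [hφ, hψ]
          split_ifs <;> omega
        rw [this]; exact hy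
      refine ⟨Q'.image ψ, ?_, ?_, ?_⟩
      · intro z hz
        simp only [mem_image] at hz
        obtain ⟨y, hy, rfl⟩ := hz
        exact hkey y hy
      · rw [card_image_of_injOn, hQ'card]
        intro a _ b _ h
        simp only [hψ] at h
        split_ifs at h <;> omega
      · intro a ha b hb hab
        simp only [mem_image] at ha hb
        obtain ⟨a', ha', rfl⟩ := ha
        obtain ⟨b', hb', rfl⟩ := hb
        have hab' : a' < b' := by
          simp only [hψ] at hab
          split_ifs at hab <;> omega
        obtain ⟨h1, h2⟩ := hQ'spread a' ha' b' hb' hab'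
        have hn0 : 1 ≤ n := by omega
        simp only [hψ] at hab ⊢
        split_ifs <;> omega



variable {n k : ℕ}

/-- Arc of positions `{i, i+1, ..., i+k-1}` modulo `n`, as a finset of `Fin n`. -/
def posArc (n k i : ℕ) (hn : 0 < n) : Finset (Fin n) :=
  (range k).image (fun t => (⟨(i + t) % n, Nat.mod_lt _ hn⟩ : Fin n))

lemma posArc_card (n k i : ℕ) (hn : 0 < n) (hkn : k ≤ n) : (posArc n k i hn).card = k := by
  rw [posArc, card_image_of_injOn, card_range]
  intro a ha b hb h
  simp only [mem_coe, mem_range] at ha hb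
  have h' : (i + a) % n = (i + b) % n := congrArg Fin.val h
  have h3 : a ≡ b [MOD n] := Nat.ModEq.add_left_cancel' i h'
  have h4 : a % n = b % n := h3
  rwa [Nat.mod_eq_of_lt (lt_of_lt_of_le ha hkn), Nat.mod_eq_of_lt (lt_of_lt_of_le hb hkn)] at h4

lemma posArc_disjoint (n k : ℕ) (hn : 0 < n) {i j : ℕ} (h1 : i + k ≤ j) (h2 : j + k ≤ n + i) :
    Disjoint (posArc n k i hn) (posArc n k j hn) := by
  rw [Finset.disjoint_left]
  intro x hx hx'
  simp only [posArc, mem_image, mem_range] at hx hx'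
  obtain ⟨t, ht, hxt⟩ := hx
  obtain ⟨t', ht', hxt'⟩ := hx'
  have h' : (i + t) % n = (j + t') % n := congrArg Fin.val (hxt.trans hxt'.symm)
  have hmod : (i + t) ≡ (j + t') [MOD n] := h'
  obtain ⟨c, hc⟩ := hmod.dvd
  push_cast at hc
  have hb1 : (1 : ℤ) ≤ (j + t' : ℤ) - (i + t) := by
    push_cast; omega
  have hb2 : (j + t' : ℤ) - (i + t) ≤ (n : ℤ) - 1 := by
    push_cast; omega
  rw [hc] at hb1 hb2
  have hn' : (0 : ℤ) < n := by exact_mod_cast hn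
  rcases le_or_gt c 0 with h | h
  · have := mul_nonpos_of_nonneg_of_nonpos (le_of_lt hn') h
    linarith
  · have : (1 : ℤ) ≤ c := h
    have := mul_le_mul_of_nonneg_left this (le_of_lt hn')
    linarith

/-- The set of labels on the arc of positions. -/
def arcImg (n k : ℕ) (hn : 0 < n) (σ : Equiv.Perm (Fin n)) (i : ℕ) : Finset ℕ :=
  (posArc n k i hn).image (fun x => (σ x).val)

lemma arcImg_card (hn : 0 < n) (hkn : k ≤ n) (σ : Equiv.Perm (Fin n)) (i : ℕ) :
    (arcImg n k hn σ i).card = k := by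
  rw [arcImg, card_image_of_injective _ (fun a b h => σ.injective (Fin.val_injective h)),
    posArc_card n k i hn hkn]

lemma arcImg_subset (hn : 0 < n) (σ : Equiv.Perm (Fin n)) (i : ℕ) :
    arcImg n k hn σ i ⊆ range n := by
  intro x hx
  simp only [arcImg, mem_image] at hx
  obtain ⟨y, _, rfl⟩ := hx
  simp [(σ y).isLt]

lemma arcImg_disjoint (hn : 0 < n) (σ : Equiv.Perm (Fin n)) {i j : ℕ}
    (h1 : i + k ≤ j) (h2 : j + k ≤ n + i) :
    Disjoint (arcImg n k hn σ i) (arcImg n k hn σ j) := by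
  rw [arcImg, arcImg, Finset.disjoint_image (fun a b h => σ.injective (Fin.val_injective h))]
  exact posArc_disjoint n k hn h1 h2

/-- subtype-to-Fin equivalences -/
noncomputable def memEquiv (s : Finset (Fin n)) {m : ℕ} (h : s.card = m) :
    {x : Fin n // x ∈ s} ≃ Fin m := s.equivFin.trans (finCongr h)

noncomputable def notMemEquiv (s : Finset (Fin n)) {m : ℕ} (h : sᶜ.card = m) :
    {x : Fin n // ¬ x ∈ s} ≃ Fin m :=
  (Equiv.subtypeEquivRight (fun x => (Finset.mem_compl (s := s) (a := x)).symm)).trans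
    (sᶜ.equivFin.trans (finCongr h))

lemma subtypeCongr_apply_mem {α : Type*} {p q : α → Prop} [DecidablePred p] [DecidablePred q]
    (e : {x // p x} ≃ {x // q x}) (f : {x // ¬ p x} ≃ {x // ¬ q x}) (x : α) (hx : p x) :
    Equiv.subtypeCongr e f x = (e ⟨x, hx⟩ : {x // q x}).val := by
  simp only [Equiv.subtypeCongr, Equiv.trans_apply]
  rw [Equiv.sumCompl_symm_apply_of_pos hx]
  simp

lemma subtypeCongr_apply_not_mem {α : Type*} {p q : α → Prop} [DecidablePred p] [DecidablePred q]
    (e : {x // p x} ≃ {x // q x}) (f : {x // ¬ p x} ≃ {x // ¬ q x}) (x : α) (hx : ¬ p x) :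
    Equiv.subtypeCongr e f x = (f ⟨x, hx⟩ : {x // ¬ q x}).val := by
  simp only [Equiv.subtypeCongr, Equiv.trans_apply]
  rw [Equiv.sumCompl_symm_apply_of_neg hx]
  simp

/-- The permutation placing `S'` on positions `posArc n k i`, parameterized by a pair of
permutations. -/
noncomputable def buildPerm (n k i : ℕ) (hn : 0 < n) (hkn : k ≤ n)
    (S' : Finset (Fin n)) (hS' : S'.card = k)
    (π : Equiv.Perm (Fin k)) (ρ : Equiv.Perm (Fin (n - k))) : Equiv.Perm (Fin n) :=
  Equiv.subtypeCongr
    (((memEquiv (posArc n k i hn) (posArc_card n k i hn hkn)).trans π).trans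
      (memEquiv S' hS').symm)
    (((notMemEquiv (posArc n k i hn)
        (by rw [card_compl, posArc_card n k i hn hkn, Fintype.card_fin])).trans ρ).trans
      (notMemEquiv S' (by rw [card_compl, hS', Fintype.card_fin])).symm)

lemma buildPerm_apply_mem (n k i : ℕ) (hn : 0 < n) (hkn : k ≤ n)
    (S' : Finset (Fin n)) (hS' : S'.card = k)
    (π : Equiv.Perm (Fin k)) (ρ : Equiv.Perm (Fin (n - k))) (x : Fin n)
    (hx : x ∈ posArc n k i hn) :
    buildPerm n k i hn hkn S' hS' π ρ x =
      ((memEquiv S' hS').symm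
        (π ((memEquiv (posArc n k i hn) (posArc_card n k i hn hkn)) ⟨x, hx⟩))).val := by
  rw [buildPerm, subtypeCongr_apply_mem _ _ x hx]
  rfl

lemma buildPerm_apply_not_mem (n k i : ℕ) (hn : 0 < n) (hkn : k ≤ n)
    (S' : Finset (Fin n)) (hS' : S'.card = k)
    (π : Equiv.Perm (Fin k)) (ρ : Equiv.Perm (Fin (n - k))) (x : Fin n)
    (hx : ¬ x ∈ posArc n k i hn) :
    buildPerm n k i hn hkn S' hS' π ρ x =
      ((notMemEquiv S' (by rw [card_compl, hS', Fintype.card_fin] : S'ᶜ.card = n - k)).symm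
        (ρ ((notMemEquiv (posArc n k i hn)
          (by rw [card_compl, posArc_card n k i hn hkn, Fintype.card_fin])) ⟨x, hx⟩))).val := by
  rw [buildPerm, subtypeCongr_apply_not_mem _ _ x hx]
  rfl

lemma buildPerm_image (n k i : ℕ) (hn : 0 < n) (hkn : k ≤ n)
    (S' : Finset (Fin n)) (hS' : S'.card = k)
    (π : Equiv.Perm (Fin k)) (ρ : Equiv.Perm (Fin (n - k))) :
    (posArc n k i hn).image (buildPerm n k i hn hkn S' hS' π ρ) = S' := by
  apply Finset.eq_of_subset_of_card_le
  · intro y hy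
    simp only [mem_image] at hy
    obtain ⟨x, hx, rfl⟩ := hy
    rw [buildPerm_apply_mem n k i hn hkn S' hS' π ρ x hx]
    exact Subtype.mem _
  · rw [card_image_of_injective _ (buildPerm n k i hn hkn S' hS' π ρ).injective,
      posArc_card n k i hn hkn, hS']

end Machinery

/-- Key counting lemma: a `k`-uniform family on `[n]` with no `s+1` pairwise disjoint
members has at most `s * C(n, k-1)` members. -/
lemma lemmaM (n k s : ℕ) (hk : 0 < k) (F : Finset (Finset ℕ))
    (hsub : ∀ S ∈ F, S ⊆ range n) (hcard : ∀ S ∈ F, S.card = k)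
    (hnu : ∀ M : Finset (Finset ℕ), M ⊆ F →
      (∀ A ∈ M, ∀ B ∈ M, A ≠ B → Disjoint A B) → M.card ≤ s) :
    F.card ≤ s * n.choose (k - 1) := by
  rcases lt_or_ge n (k * (s + 1)) with hsmall | hbig
  · -- trivial regime
    have h1 : F ⊆ (range n).powersetCard k := by
      intro S hS
      rw [mem_powersetCard]
      exact ⟨hsub S hS, hcard S hS⟩
    have h2 : F.card ≤ n.choose k := by
      have := card_le_card h1
      rwa [card_powersetCard, card_range] at this
    have h3 : n.choose k * k ≤ s * n.choose (k - 1) * k := by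
      have hid : n.choose k * k = n.choose (k - 1) * (n - (k - 1)) := by
        conv_lhs => rw [show k = (k - 1) + 1 by omega]
        exact Nat.choose_succ_right_eq n (k - 1)
      rw [hid]
      have hks : k * (s + 1) = s * k + k := by ring
      have : n - (k - 1) ≤ s * k := by omega
      calc n.choose (k - 1) * (n - (k - 1)) ≤ n.choose (k - 1) * (s * k) :=
            Nat.mul_le_mul_left _ this
        _ = s * n.choose (k - 1) * k := by ring
    exact le_trans h2 (Nat.le_of_mul_le_mul_right h3 hk)
  · -- Katona circle regime
    have hn : 0 < n := lt_of_lt_of_le (by positivity) hbig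
    have hkn : k ≤ n := le_trans (Nat.le_mul_of_pos_right k (by omega)) hbig
    set T : Finset ((_ : Equiv.Perm (Fin n)) × ℕ) :=
      Finset.univ.sigma
        (fun σ : Equiv.Perm (Fin n) =>
          (range n).filter (fun i => arcImg n k hn σ i ∈ F)) with hT
    -- row bound
    have hrow : ∀ σ : Equiv.Perm (Fin n),
        ((range n).filter (fun i => arcImg n k hn σ i ∈ F)).card ≤ k * s := by
      intro σ
      by_contra hcon
      push_neg at hcon
      obtain ⟨Q, hQP, hQcard, hQspread⟩ :=
        spread_lemma k s hk n hbig ((range n).filter (fun i => arcImg n k hn σ i ∈ F))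
          (filter_subset _ _) hcon
      set M : Finset (Finset ℕ) := Q.image (fun i => arcImg n k hn σ i) with hMdef
      have hdisj : ∀ i ∈ Q, ∀ j ∈ Q, i ≠ j →
          Disjoint (arcImg n k hn σ i) (arcImg n k hn σ j) := by
        intro i hi j hj hij
        rcases lt_or_gt_of_ne hij with h | h
        · obtain ⟨ha, hb⟩ := hQspread i hi j hj h
          exact arcImg_disjoint hn σ ha hb
        · obtain ⟨ha, hb⟩ := hQspread j hj i hi h
          exact (arcImg_disjoint hn σ ha hb).symm
      have hMF : M ⊆ F := by
        intro S hS
        simp only [hMdef, mem_image] at hS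
        obtain ⟨i, hi, rfl⟩ := hS
        exact (mem_filter.mp (hQP hi)).2
      have hMpair : ∀ A ∈ M, ∀ B ∈ M, A ≠ B → Disjoint A B := by
        intro A hA B hB hAB
        simp only [hMdef, mem_image] at hA hB
        obtain ⟨i, hi, rfl⟩ := hA
        obtain ⟨j, hj, rfl⟩ := hB
        exact hdisj i hi j hj (fun h => hAB (by rw [h]))
      have hMcard : M.card = s + 1 := by
        rw [hMdef, card_image_of_injOn, hQcard]
        intro i hi j hj hij
        by_contra hne
        have hd := hdisj i hi j hj hne
        have hij' : arcImg n k hn σ i = arcImg n k hn σ j := hij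
        rw [hij', disjoint_self] at hd
        have hcardi := arcImg_card hn hkn σ j
        rw [hd] at hcardi
        simp at hcardi
        omega
      have := hnu M hMF hMpair
      omega
    have hTub : T.card ≤ n.factorial * (k * s) := by
      rw [hT, card_sigma]
      calc ∑ σ : Equiv.Perm (Fin n),
            ((range n).filter (fun i => arcImg n k hn σ i ∈ F)).card
          ≤ ∑ _σ : Equiv.Perm (Fin n), k * s := Finset.sum_le_sum (fun σ _ => hrow σ)
        _ = n.factorial * (k * s) := by
            rw [Finset.sum_const, card_univ, Fintype.card_perm, Fintype.card_fin, smul_eq_mul]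
    -- fiberwise partition of T
    have hTsum : T.card = ∑ S ∈ F, (T.filter (fun q => arcImg n k hn q.1 q.2 = S)).card := by
      apply card_eq_sum_card_fiberwise
      intro q hq
      rw [hT, mem_coe, mem_sigma] at hq
      exact (mem_filter.mp hq.2).2
    -- fiber lower bound
    have hfiber : ∀ S ∈ F, n * (k.factorial * (n - k).factorial) ≤
        (T.filter (fun q => arcImg n k hn q.1 q.2 = S)).card := by
      intro S hSF
      have hSn := hsub S hSF
      have hSk := hcard S hSF
      set S' : Finset (Fin n) := Finset.univ.filter (fun x : Fin n => x.val ∈ S) with hS'def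
      have hS'img : S'.image Fin.val = S := by
        ext y
        simp only [hS'def, mem_image, mem_filter, mem_univ, true_and]
        constructor
        · rintro ⟨x, hx, rfl⟩; exact hx
        · intro hy
          have hyn : y < n := by have := hSn hy; simpa [mem_range] using this
          exact ⟨⟨y, hyn⟩, hy, rfl⟩
      have hS'card : S'.card = k := by
        rw [← hSk, ← hS'img, card_image_of_injective _ Fin.val_injective]
      set Src : Finset (ℕ × Equiv.Perm (Fin k) × Equiv.Perm (Fin (n - k))) :=
        (range n) ×ˢ (Finset.univ ×ˢ Finset.univ) with hSrc
      have hSrcCard : Src.card = n * (k.factorial * (n - k).factorial) := by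
        rw [hSrc, card_product, card_product, card_range, card_univ, card_univ,
          Fintype.card_perm, Fintype.card_perm, Fintype.card_fin, Fintype.card_fin]
      rw [← hSrcCard]
      apply card_le_card_of_injOn
        (fun q => (⟨buildPerm n k q.1 hn hkn S' hS'card q.2.1 q.2.2, q.1⟩ :
          (_ : Equiv.Perm (Fin n)) × ℕ))
      · intro q hq
        rw [hSrc, mem_coe, mem_product] at hq
        have harc : arcImg n k hn (buildPerm n k q.1 hn hkn S' hS'card q.2.1 q.2.2) q.1 = S := by
          rw [arcImg, ← hS'img]
          rw [show (fun x => ((buildPerm n k q.1 hn hkn S' hS'card q.2.1 q.2.2) x).val) =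
            Fin.val ∘ (buildPerm n k q.1 hn hkn S' hS'card q.2.1 q.2.2) from rfl]
          rw [← Finset.image_image, buildPerm_image]
        rw [mem_coe, mem_filter, hT, mem_sigma]
        refine ⟨⟨mem_univ _, ?_⟩, harc⟩
        rw [mem_filter]
        exact ⟨hq.1, by rw [harc]; exact hSF⟩
      · intro q hq q' hq' heq
        have hi' : q.1 = q'.1 := congrArg Sigma.snd heq
        have hperm : buildPerm n k q.1 hn hkn S' hS'card q.2.1 q.2.2 =
            buildPerm n k q.1 hn hkn S' hS'card q'.2.1 q'.2.2 := by
          have h0 : buildPerm n k q.1 hn hkn S' hS'card q.2.1 q.2.2 =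
              buildPerm n k q'.1 hn hkn S' hS'card q'.2.1 q'.2.2 := congrArg Sigma.fst heq
          rw [← hi'] at h0
          exact h0
        have hπ : q.2.1 = q'.2.1 := by
          ext y
          have hx := ((memEquiv (posArc n k q.1 hn) (posArc_card n k q.1 hn hkn)).symm y).2
          have e1 := buildPerm_apply_mem n k q.1 hn hkn S' hS'card q.2.1 q.2.2 _ hx
          have e2 := buildPerm_apply_mem n k q.1 hn hkn S' hS'card q'.2.1 q'.2.2 _ hx
          rw [Subtype.coe_eta, Equiv.apply_symm_apply] at e1 e2
          rw [hperm] at e1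
          have := e1.symm.trans e2
          have h2 := Subtype.val_injective this
          have h3 := (memEquiv S' hS'card).symm.injective h2
          exact congrArg Fin.val h3
        have hρ : q.2.2 = q'.2.2 := by
          ext y
          have hx := ((notMemEquiv (posArc n k q.1 hn)
            (by rw [card_compl, posArc_card n k q.1 hn hkn, Fintype.card_fin])).symm y).2
          have e1 := buildPerm_apply_not_mem n k q.1 hn hkn S' hS'card q.2.1 q.2.2 _ hx
          have e2 := buildPerm_apply_not_mem n k q.1 hn hkn S' hS'card q'.2.1 q'.2.2 _ hx
          rw [Subtype.coe_eta, Equiv.apply_symm_apply] at e1 e2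
          rw [hperm] at e1
          have := e1.symm.trans e2
          have h2 := Subtype.val_injective this
          have h3 := (notMemEquiv S' _).symm.injective h2
          exact congrArg Fin.val h3
        exact Prod.ext hi' (Prod.ext hπ hρ)
    -- combine
    have hTlb : F.card * (n * (k.factorial * (n - k).factorial)) ≤ T.card := by
      rw [hTsum]
      calc F.card * (n * (k.factorial * (n - k).factorial))
          = ∑ _S ∈ F, n * (k.factorial * (n - k).factorial) := by
            rw [Finset.sum_const, smul_eq_mul]
        _ ≤ ∑ S ∈ F, (T.filter (fun q => arcImg n k hn q.1 q.2 = S)).card :=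
            Finset.sum_le_sum hfiber
    have hmain : F.card * (n * (k.factorial * (n - k).factorial)) ≤
        n.factorial * (k * s) := le_trans hTlb hTub
    -- arithmetic cleanup
    have hfact : n.choose k * k.factorial * (n - k).factorial = n.factorial :=
      Nat.choose_mul_factorial_mul_factorial hkn
    have hstep : F.card * n * (k.factorial * (n - k).factorial) ≤
        (s * (n.choose k * k)) * (k.factorial * (n - k).factorial) := by
      calc F.card * n * (k.factorial * (n - k).factorial)
          = F.card * (n * (k.factorial * (n - k).factorial)) := by ring
        _ ≤ n.factorial * (k * s) := hmain
        _ = (s * (n.choose k * k)) * (k.factorial * (n - k).factorial) := by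
            rw [← hfact]; ring
    have hpos : 0 < k.factorial * (n - k).factorial :=
      Nat.mul_pos (Nat.factorial_pos _) (Nat.factorial_pos _)
    have hstep2 : F.card * n ≤ s * (n.choose k * k) :=
      Nat.le_of_mul_le_mul_right hstep hpos
    have hid : n.choose k * k = n.choose (k - 1) * (n - (k - 1)) := by
      conv_lhs => rw [show k = (k - 1) + 1 by omega]
      exact Nat.choose_succ_right_eq n (k - 1)
    have hstep3 : F.card * n ≤ s * n.choose (k - 1) * n := by
      rw [hid] at hstep2
      calc F.card * n ≤ s * (n.choose (k - 1) * (n - (k - 1))) := hstep2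
        _ ≤ s * (n.choose (k - 1) * n) := by
            apply Nat.mul_le_mul_left
            apply Nat.mul_le_mul_left
            omega
        _ = s * n.choose (k - 1) * n := by ring
    exact Nat.le_of_mul_le_mul_right hstep3 hn

lemma delete_aux (r n p d : ℕ) (hdr : d < r) (G : HG) (hG : Uniform r G)
    (hGn : ∀ e ∈ G, e ⊆ Finset.range n) :
    ∀ m : ℕ, ∀ H : HG, H ⊆ G →
      (((range n).powersetCard d).filter (fun D => ∃ e ∈ H, D ⊆ e)).card = m →
      ∃ G', G' ⊆ H ∧
        H.card ≤ G'.card + p * (n.choose (r - d - 1)) * m ∧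
        ∀ D : Finset ℕ, D.card = d → (∃ e ∈ G', D ⊆ e) → HasSunflower G' D (p + 1) := by
  intro m
  induction m using Nat.strong_induction_on with
  | _ m ih =>
    intro H hHG hm
    by_cases hgood : ∀ D ∈ ((range n).powersetCard d).filter (fun D => ∃ e ∈ H, D ⊆ e),
        HasSunflower H D (p + 1)
    · refine ⟨H, subset_rfl, Nat.le_add_right _ _, ?_⟩
      intro D hD hpos
      obtain ⟨e, he, hDe⟩ := hpos
      apply hgood
      rw [mem_filter, mem_powersetCard]
      exact ⟨⟨hDe.trans (hGn e (hHG he)), hD⟩, ⟨e, he, hDe⟩⟩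
    · push_neg at hgood
      obtain ⟨D, hDmem, hDbad⟩ := hgood
      rw [mem_filter, mem_powersetCard] at hDmem
      obtain ⟨⟨hDn, hDd⟩, e₀, he₀, hDe₀⟩ := hDmem
      set H1 : HG := H.filter (fun e => ¬ D ⊆ e) with hH1
      set Del : HG := H.filter (fun e => D ⊆ e) with hDel
      have hsplit : Del.card + H1.card = H.card :=
        card_filter_add_card_filter_not (fun e => D ⊆ e)
      -- bound on the number of deleted edges
      have hDelbound : Del.card ≤ p * n.choose (r - d - 1) := by
        set L : Finset (Finset ℕ) := Del.image (fun e => e \ D) with hL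
        have hinj : Set.InjOn (fun e => e \ D) ↑Del := by
          intro a ha b hb hab
          simp only [mem_coe, hDel, mem_filter] at ha hb
          rw [← sdiff_union_of_subset ha.2, ← sdiff_union_of_subset hb.2]
          simp only at hab
          rw [hab]
        have hLcard : L.card = Del.card := card_image_of_injOn hinj
        have hbound := lemmaM n (r - d) p (by omega) L ?_ ?_ ?_
        · rw [hLcard] at hbound
          have : r - d - 1 = (r - d) - 1 := rfl
          omega
        · intro S hS
          simp only [hL, mem_image] at hS
          obtain ⟨e, he, rfl⟩ := hS
          exact (sdiff_subset).trans (hGn e (hHG (mem_filter.mp he).1))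
        · intro S hS
          simp only [hL, mem_image] at hS
          obtain ⟨e, he, rfl⟩ := hS
          rw [mem_filter] at he
          rw [card_sdiff_of_subset he.2, hG e (hHG he.1), hDd]
        · intro M hML hMdisj
          by_contra hcon
          push_neg at hcon
          obtain ⟨M', hM'M, hM'card⟩ := Finset.exists_subset_card_eq (show p + 1 ≤ M.card from hcon)
          apply hDbad
          refine ⟨M'.image (fun T => T ∪ D), ?_, ?_, ?_, ?_⟩
          · intro A hA
            simp only [mem_image] at hA
            obtain ⟨T, hT, rfl⟩ := hA
            have hTL := hML (hM'M hT)
            simp only [hL, mem_image] at hTL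
            obtain ⟨e, he, rfl⟩ := hTL
            rw [mem_filter] at he
            rw [sdiff_union_of_subset he.2]
            exact he.1
          · rw [card_image_of_injOn, hM'card]
            intro a ha b hb hab
            have hda : Disjoint a D := by
              have hTL := hML (hM'M ha)
              simp only [hL, mem_image] at hTL
              obtain ⟨e, _, rfl⟩ := hTL
              exact sdiff_disjoint
            have hdb : Disjoint b D := by
              have hTL := hML (hM'M hb)
              simp only [hL, mem_image] at hTL
              obtain ⟨e, _, rfl⟩ := hTL
              exact sdiff_disjoint
            simp only at hab
            have : (a ∪ D) \ D = (b ∪ D) \ D := by rw [hab]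
            rwa [union_sdiff_right, union_sdiff_right, sdiff_eq_self_of_disjoint hda,
              sdiff_eq_self_of_disjoint hdb] at this
          · intro A hA
            simp only [mem_image] at hA
            obtain ⟨T, _, rfl⟩ := hA
            exact subset_union_right
          · intro A hA B hB hAB
            simp only [mem_image] at hA hB
            obtain ⟨T, hT, rfl⟩ := hA
            obtain ⟨T', hT', rfl⟩ := hB
            have hTT' : T ≠ T' := fun h => hAB (by rw [h])
            have hdisjTT' : Disjoint T T' := hMdisj T (hM'M hT) T' (hM'M hT') hTT'
            have hda : Disjoint T D := by
              have hTL := hML (hM'M hT)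
              simp only [hL, mem_image] at hTL
              obtain ⟨e, _, rfl⟩ := hTL
              exact sdiff_disjoint
            ext x
            simp only [mem_inter, mem_union]
            constructor
            · rintro ⟨hx1 | hx1, hx2 | hx2⟩
              · exact absurd hx2 (Finset.disjoint_left.mp hdisjTT' hx1)
              · exact hx2
              · exact hx1
              · exact hx1
            · intro hx
              exact ⟨Or.inr hx, Or.inr hx⟩
      -- the set of positive-degree d-sets strictly decreases
      have hssub : ((range n).powersetCard d).filter (fun D' => ∃ e ∈ H1, D' ⊆ e) ⊂
          ((range n).powersetCard d).filter (fun D' => ∃ e ∈ H, D' ⊆ e) := by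
        rw [Finset.ssubset_iff_of_subset]
        · refine ⟨D, ?_, ?_⟩
          · rw [mem_filter, mem_powersetCard]
            exact ⟨⟨hDn, hDd⟩, e₀, he₀, hDe₀⟩
          · rw [mem_filter]
            rintro ⟨-, e, he, hDe⟩
            rw [hH1, mem_filter] at he
            exact he.2 hDe
        · apply Finset.monotone_filter_right
          rintro D' - ⟨e, he, hD'e⟩
          rw [hH1, mem_filter] at he
          exact ⟨e, he.1, hD'e⟩
      have hm1lt : (((range n).powersetCard d).filter (fun D' => ∃ e ∈ H1, D' ⊆ e)).card < m := by
        rw [← hm]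
        exact card_lt_card hssub
      obtain ⟨G', hG'sub, hG'count, hG'prop⟩ :=
        ih _ hm1lt H1 ((filter_subset _ _).trans hHG) rfl
      refine ⟨G', hG'sub.trans (filter_subset _ _), ?_, hG'prop⟩
      set m1 := (((range n).powersetCard d).filter (fun D' => ∃ e ∈ H1, D' ⊆ e)).card
      have hmul : p * n.choose (r - d - 1) * m1 + p * n.choose (r - d - 1) =
          p * n.choose (r - d - 1) * (m1 + 1) := by ring
      have hmul2 : p * n.choose (r - d - 1) * (m1 + 1) ≤ p * n.choose (r - d - 1) * m :=
        Nat.mul_le_mul_left _ (by omega)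
      omega


/-- Passing to a subgraph in which every `d`-set of positive degree
has kernel degree greater than `p`. -/
theorem stmt_10 (r n p d : ℕ) (hp : 0 < p) (hd : 0 < d) (hdr : d < r)
    (G : HG) (hG : Uniform r G) (hGn : ∀ e ∈ G, e ⊆ Finset.range n) :
    ∃ G' : HG, G' ⊆ G ∧
      (G.card : ℝ) - (p : ℝ) * (n.choose d : ℝ) * (n.choose (r - d - 1) : ℝ) ≤ (G'.card : ℝ) ∧
      ∀ D : Finset ℕ, D.card = d → (∃ e ∈ G', D ⊆ e) → HasSunflower G' D (p + 1) := by
  obtain ⟨G', hsub, hcount, hprop⟩ := delete_aux r n p d hdr G hG hGn _ G subset_rfl rfl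
  refine ⟨G', hsub, ?_, hprop⟩
  have hmle : (((range n).powersetCard d).filter (fun D => ∃ e ∈ G, D ⊆ e)).card ≤
      n.choose d := by
    calc (((range n).powersetCard d).filter (fun D => ∃ e ∈ G, D ⊆ e)).card
        ≤ ((range n).powersetCard d).card := card_filter_le _ _
      _ = n.choose d := by rw [card_powersetCard, card_range]
  have h2 : G.card ≤ G'.card + p * n.choose (r - d - 1) * n.choose d :=
    le_trans hcount (by
      have := Nat.mul_le_mul_left (p * n.choose (r - d - 1)) hmle
      omega)
  have hcomm : p * n.choose (r - d - 1) * n.choose d = p * n.choose d * n.choose (r - d - 1) := by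
    ring
  rw [hcomm] at h2
  have h3 : (G.card : ℝ) ≤ (G'.card : ℝ) +
      (p : ℝ) * (n.choose d : ℝ) * (n.choose (r - d - 1) : ℝ) := by exact_mod_cast h2
  linarith
end
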